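/- Let μ, m, δ, δ̃ ≥ 0, N ≥ 1, and let x₀, x₁, …, x_N ∈ Q, L₁, …, L_N > 0 be such that for each k = 0, …, N−1 there are f_δ(x_k) ∈ ℝ and a convex function ψ_k : E → ℝ with ψ_k(x_k) = 0 that is m-strongly convex relative to d, satisfying: (a) μ·V[x_k](x) ≤ f(x) − f_δ(x_k) − ψ_k(x) for all x ∈ Q; (b) f(x_k) − δ ≤ f_δ(x_k) ≤ f(x_k); (c) x_{k+1} is a δ̃-approximate minimizer of x ↦ ψ_k(x) + L_{k+1}·V[x_k](x) on Q; (d) f_δ(x_{k+1}) ≤ f_δ(x_k) + ψ_k(x_{k+1}) + L_{k+1}·V[x_k](x_{k+1}) + δ, where f_δ(x_N) is also assumed to satisfy f(x_N) − δ ≤ f_δ(x_N) ≤ f(x_N). Let x⋆ ∈ Q be a minimizer of f on Q. Define q_k := (L_k − μ)/(L_k + m) if L_k > μ and q_k := 0 otherwise, Q_j^N := ∏_{i=j}^{N} q_i (with Q_j^N := 1 for j > N), and let y_N := x_{j(N)} where j(N) minimizes f_δ(x_k) over k = 1, …, N. Then f(y_N) − f(x⋆) ≤ min{(L_N + m)·Q_1^N,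 1 / (∑_{i=1}^{N} 1/(L_i + m))}·V[x₀](x⋆) + δ̃ + 3δ. -/

import Mathlib

open RealInnerProductSpace Finset

/-- The Bregman divergence `V[y](x) = d(x) - d(y) - ⟪∇d(y), x - y⟫` generated by `d`
with gradient map `Dd`. -/
noncomputable def breg {E : Type*} [NormedAddCommGroup E] [InnerProductSpace ℝ E]
    (d : E → ℝ) (Dd : E → E) (y x : E) : ℝ :=
  d x - d y - ⟪Dd y, x - y⟫

/-- `g` is a subgradient of `ψ` at `z` (relative to the set `Q`). -/
def IsSubgradOn {E : Type*} [NormedAddCommGroup E] [InnerProductSpace ℝ E]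
    (Q : Set E) (ψ : E → ℝ) (z g : E) : Prop :=
  ∀ x ∈ Q, ψ z + ⟪g, x - z⟫ ≤ ψ x

/-- `ψ` is `m`-strongly convex relative to `d` on `Q`, where `V` is the Bregman
divergence generated by `d`. -/
def StrongRelConvexOn {E : Type*} [NormedAddCommGroup E] [InnerProductSpace ℝ E]
    (Q : Set E) (V : E → E → ℝ) (m : ℝ) (ψ : E → ℝ) : Prop :=
  ∀ z ∈ Q, ∀ g : E, IsSubgradOn Q ψ z g → ∀ x ∈ Q, ψ z + ⟪g, x - z⟫ + m * V z x ≤ ψ x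

/-- `y` is a `δ`-approximate minimizer of `Ψ` on `Q`: there exists a subgradient `h`
of `Ψ` at `y` such that `⟪h, x - y⟫ ≥ -δ` for all `x ∈ Q`. -/
def IsApproxMinOn {E : Type*} [NormedAddCommGroup E] [InnerProductSpace ℝ E]
    (Q : Set E) (Ψ : E → ℝ) (δ : ℝ) (y : E) : Prop :=
  y ∈ Q ∧ ∃ h : E, IsSubgradOn Q Ψ y h ∧ ∀ x ∈ Q, -δ ≤ ⟪h, x - y⟫

section helpers

open Filter Topology

variable {E : Type*} [NormedAddCommGroup E] [InnerProductSpace ℝ E] [CompleteSpace E]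

lemma slope_tendsto (d : E → ℝ) (g z v : E) (h : HasGradientAt d g z) :
    Filter.Tendsto (fun t : ℝ => (d (z + t • v) - d z) / t) (𝓝[>] (0:ℝ)) (𝓝 ⟪g, v⟫) := by
  have hline : HasDerivAt (fun t : ℝ => z + t • v) v 0 := by
    simpa using ((hasDerivAt_id (0:ℝ)).smul_const v).const_add z
  have hg : HasFDerivAt d (InnerProductSpace.toDual ℝ E g) z :=
    (hasGradientAt_iff_hasFDerivAt).mp h
  have hcomp : HasDerivAt (fun t : ℝ => d (z + t • v)) ⟪g, v⟫ 0 := by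
    have hz0 : HasFDerivAt d (InnerProductSpace.toDual ℝ E g) (z + (0:ℝ) • v) := by
      simpa using hg
    have := hz0.comp_hasDerivAt 0 hline
    simpa [InnerProductSpace.toDual_apply_apply, Function.comp_def] using this
  have := hasDerivAt_iff_tendsto_slope.mp hcomp
  have h2 : Filter.Tendsto (slope (fun t : ℝ => d (z + t • v)) 0) (𝓝[>] (0:ℝ)) (𝓝 ⟪g, v⟫) :=
    this.mono_left (nhdsWithin_mono _ fun t ht => ne_of_gt ht)
  refine h2.congr' ?_
  filter_upwards [self_mem_nhdsWithin] with t ht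
  simp [slope, (Set.mem_Ioi.mp ht).ne', div_eq_inv_mul]

lemma grad_ineq (d : E → ℝ) (Dd : E → E) (hd_conv : ConvexOn ℝ Set.univ d)
    (hd_diff : ∀ x, HasGradientAt d (Dd x) x) (z u : E) :
    ⟪Dd z, u - z⟫ ≤ d u - d z := by
  refine le_of_tendsto (slope_tendsto d (Dd z) z (u - z) (hd_diff z)) ?_
  filter_upwards [Ioo_mem_nhdsGT_of_mem (Set.left_mem_Ico.mpr one_pos)] with t ht
  have hco : d (z + t • (u - z)) ≤ (1 - t) * d z + t * d u := by
    have := hd_conv.2 (Set.mem_univ z) (Set.mem_univ u) (by linarith [ht.2] : (0:ℝ) ≤ 1 - t)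
      (le_of_lt ht.1) (by ring)
    have he : (1 - t) • z + t • u = z + t • (u - z) := by
      rw [sub_smul, one_smul, smul_sub]; abel
    rw [he] at this
    simpa [smul_eq_mul] using this
  rw [div_le_iff₀ ht.1]
  nlinarith [ht.1]

lemma breg_nonneg (d : E → ℝ) (Dd : E → E) (hd_conv : ConvexOn ℝ Set.univ d)
    (hd_diff : ∀ x, HasGradientAt d (Dd x) x) (y x : E) :
    0 ≤ breg d Dd y x := by
  have := grad_ineq d Dd hd_conv hd_diff y x
  simp only [breg]; linarith

lemma subgrad_extract (Q : Set E) (hQ : Convex ℝ Q)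
    (d : E → ℝ) (Dd : E → E) (hd_diff : ∀ x, HasGradientAt d (Dd x) x)
    (ψk : E → ℝ) (hψc : ConvexOn ℝ Q ψk) (p z : E) (hz : z ∈ Q) (Lc : ℝ)
    (hv : E) (hsub : IsSubgradOn Q (fun w => ψk w + Lc * breg d Dd p w) z hv) :
    IsSubgradOn Q ψk z (hv - Lc • (Dd z - Dd p)) := by
  intro u hu
  have hinner : ⟪hv - Lc • (Dd z - Dd p), u - z⟫
      = ⟪hv, u - z⟫ + Lc * ⟪Dd p, u - z⟫ - Lc * ⟪Dd z, u - z⟫ := by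
    simp [inner_sub_left, real_inner_smul_left, inner_sub_right]; ring
  rw [hinner]
  have hlim : Filter.Tendsto (fun t : ℝ => ⟪hv, u - z⟫ + Lc * ⟪Dd p, u - z⟫
      - Lc * ((d (z + t • (u - z)) - d z) / t)) (𝓝[>] (0:ℝ))
      (𝓝 (⟪hv, u - z⟫ + Lc * ⟪Dd p, u - z⟫ - Lc * ⟪Dd z, u - z⟫)) :=
    tendsto_const_nhds.sub ((slope_tendsto d (Dd z) z (u - z) (hd_diff z)).const_mul Lc)
  have hev : ∀ᶠ t in 𝓝[>] (0:ℝ), ⟪hv, u - z⟫ + Lc * ⟪Dd p, u - z⟫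
      - Lc * ((d (z + t • (u - z)) - d z) / t) ≤ ψk u - ψk z := by
    filter_upwards [Ioo_mem_nhdsGT_of_mem (Set.left_mem_Ico.mpr one_pos)] with t ht
    set w := z + t • (u - z) with hw
    have hwQ : w ∈ Q := by
      have : (1 - t) • z + t • u ∈ Q :=
        hQ hz hu (by linarith [ht.2]) (le_of_lt ht.1) (by ring)
      have he : (1 - t) • z + t • u = w := by rw [hw, sub_smul, one_smul, smul_sub]; abel
      rwa [he] at this
    have h1 := hsub w hwQ
    have h2 : ψk w ≤ (1 - t) * ψk z + t * ψk u := by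
      have := hψc.2 hz hu (by linarith [ht.2] : (0:ℝ) ≤ 1 - t) (le_of_lt ht.1) (by ring)
      have he : (1 - t) • z + t • u = w := by rw [hw, sub_smul, one_smul, smul_sub]; abel
      rw [he] at this
      simpa [smul_eq_mul] using this
    have h3 : breg d Dd p w - breg d Dd p z = d w - d z - t * ⟪Dd p, u - z⟫ := by
      have hwz : w - p = (z - p) + t • (u - z) := by rw [hw]; abel
      simp only [breg, hwz, inner_add_right, real_inner_smul_right]
      ring
    have h4 : ⟪hv, w - z⟫ = t * ⟪hv, u - z⟫ := by
      have : w - z = t • (u - z) := by rw [hw]; abel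
      rw [this, real_inner_smul_right]
    simp only at h1
    rw [h4] at h1
    have h3' : Lc * (breg d Dd p w - breg d Dd p z)
        = Lc * (d w - d z - t * ⟪Dd p, u - z⟫) := by rw [h3]
    refine le_of_mul_le_mul_left ?_ ht.1
    have hcan : Lc * (t * ((d w - d z) / t)) = Lc * (d w - d z) := by
      rw [mul_div_cancel₀ _ ht.1.ne']
    nlinarith [h1, h2, h3', hcan]
  have hfin := le_of_tendsto hlim hev
  linarith

end helpers

/-- Theorem 3.1, objective bound: convergence rate in objective value of the
adaptive gradient method with an inexact `(δ, L, μ, m, V)`-model. -/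
theorem stmt3
    {E : Type*} [NormedAddCommGroup E] [InnerProductSpace ℝ E] [FiniteDimensional ℝ E]
    (Q : Set E) (hQ : Convex ℝ Q)
    (d : E → ℝ) (Dd : E → E)
    (hd_conv : ConvexOn ℝ Set.univ d) (hd_diff : ∀ x, HasGradientAt d (Dd x) x)
    (f : E → ℝ) (μ m δ δt : ℝ)
    (hμ : 0 ≤ μ) (hm : 0 ≤ m) (hδ : 0 ≤ δ) (hδt : 0 ≤ δt)
    (N : ℕ) (hN : 1 ≤ N)
    (x : ℕ → E) (hxQ : ∀ k ≤ N, x k ∈ Q)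
    (L : ℕ → ℝ) (hL : ∀ k, 1 ≤ k → k ≤ N → 0 < L k)
    (fδ : ℕ → ℝ) (ψ : ℕ → E → ℝ)
    (hψ_conv : ∀ k < N, ConvexOn ℝ Q (ψ k))
    (hψ0 : ∀ k < N, ψ k (x k) = 0)
    (hψ_strong : ∀ k < N, StrongRelConvexOn Q (breg d Dd) m (ψ k))
    (ha : ∀ k < N, ∀ u ∈ Q, μ * breg d Dd (x k) u ≤ f u - fδ k - ψ k u)
    (hb : ∀ k ≤ N, f (x k) - δ ≤ fδ k ∧ fδ k ≤ f (x k))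
    (hc : ∀ k < N,
      IsApproxMinOn Q (fun u => ψ k u + L (k + 1) * breg d Dd (x k) u) δt (x (k + 1)))
    (hd_ls : ∀ k < N,
      fδ (k + 1) ≤ fδ k + ψ k (x (k + 1)) + L (k + 1) * breg d Dd (x k) (x (k + 1)) + δ)
    (xs : E) (hxs : xs ∈ Q) (hmin : ∀ u ∈ Q, f xs ≤ f u)
    (q : ℕ → ℝ) (hq : ∀ k, q k = if μ < L k then (L k - μ) / (L k + m) else 0)
    (jN : ℕ) (hjN : jN ∈ Finset.Icc 1 N)
    (hjmin : ∀ k ∈ Finset.Icc 1 N, fδ jN ≤ fδ k) :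
    f (x jN) - f xs ≤
      min ((L N + m) * ∏ i ∈ Finset.Icc 1 N, q i)
          (1 / ∑ i ∈ Finset.Icc 1 N, 1 / (L i + m)) * breg d Dd (x 0) xs
        + δt + 3 * δ := by
  have hVnn : ∀ y u : E, 0 ≤ breg d Dd y u := breg_nonneg d Dd hd_conv hd_diff
  have hLm : ∀ i, 1 ≤ i → i ≤ N → 0 < L i + m := fun i h1 h2 => by linarith [hL i h1 h2]
  have hq0 : ∀ i, 0 ≤ q i := by
    intro i; rw [hq]
    split_ifs with h
    · exact div_nonneg (by linarith) (by linarith)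
    · exact le_refl 0
  have hq1 : ∀ i, q i ≤ 1 := by
    intro i; rw [hq]
    split_ifs with h
    · rw [div_le_one (by linarith)]; linarith
    · norm_num
  -- key inequality per step
  have key : ∀ k < N, fδ (k+1) - f xs + (L (k+1) + m) * breg d Dd (x (k+1)) xs ≤
      (L (k+1) - μ) * breg d Dd (x k) xs + δt + δ := by
    intro k hk
    obtain ⟨hz1, hv, hsub, happrox⟩ := hc k hk
    have hg := subgrad_extract Q hQ d Dd hd_diff (ψ k) (hψ_conv k hk) (x k) (x (k+1)) hz1
      (L (k+1)) hv hsub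
    have hstrong := hψ_strong k hk (x (k+1)) hz1 _ hg xs hxs
    have e2 : ⟪hv - L (k+1) • (Dd (x (k+1)) - Dd (x k)), xs - x (k+1)⟫
        = ⟪hv, xs - x (k+1)⟫
          - L (k+1) * (⟪Dd (x (k+1)), xs - x (k+1)⟫ - ⟪Dd (x k), xs - x (k+1)⟫) := by
      simp only [inner_sub_left, real_inner_smul_left, inner_sub_right]; ring
    rw [e2] at hstrong
    have e5 : L (k+1) * breg d Dd (x k) xs = L (k+1) * breg d Dd (x k) (x (k+1))
        + L (k+1) * (⟪Dd (x (k+1)), xs - x (k+1)⟫ - ⟪Dd (x k), xs - x (k+1)⟫)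
        + L (k+1) * breg d Dd (x (k+1)) xs := by
      simp only [breg, inner_sub_left, inner_sub_right]; ring
    have happ := happrox xs hxs
    have hha := ha k hk xs hxs
    have hls := hd_ls k hk
    have e6 : (L (k+1) + m) * breg d Dd (x (k+1)) xs
        = L (k+1) * breg d Dd (x (k+1)) xs + m * breg d Dd (x (k+1)) xs := by ring
    have e7 : (L (k+1) - μ) * breg d Dd (x k) xs
        = L (k+1) * breg d Dd (x k) xs - μ * breg d Dd (x k) xs := by ring
    linarith [hstrong, happ, hha, hls, e5, e6, e7]
  -- key2 with q
  have key2 : ∀ k < N, fδ (k+1) - f xs + (L (k+1) + m) * breg d Dd (x (k+1)) xs ≤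
      q (k+1) * ((L (k+1) + m) * breg d Dd (x k) xs) + δt + δ := by
    intro k hk
    have hk1 : 0 < L (k+1) + m := hLm (k+1) (by omega) hk
    have hcoef : (L (k+1) - μ) * breg d Dd (x k) xs
        ≤ q (k+1) * ((L (k+1) + m) * breg d Dd (x k) xs) := by
      rw [hq]
      split_ifs with h
      · have : (L (k+1) - μ) / (L (k+1) + m) * ((L (k+1) + m) * breg d Dd (x k) xs)
            = (L (k+1) - μ) * breg d Dd (x k) xs := by
          field_simp
        rw [this]
      · simp only [zero_mul]
        exact mul_nonpos_of_nonpos_of_nonneg (by linarith) (hVnn _ _)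
    linarith [key k hk]
  -- bound 2 : summation
  have hsum : ∀ n ≤ N, ∑ k ∈ Finset.Icc 1 n, (fδ k - f xs) / (L k + m)
      + breg d Dd (x n) xs
      ≤ breg d Dd (x 0) xs + (δt + δ) * ∑ k ∈ Finset.Icc 1 n, 1 / (L k + m) := by
    intro n
    induction n with
    | zero => intro _; simp [hVnn]
    | succ n ih =>
      intro hn
      have hkN : n < N := by omega
      have ihh := ih (by omega)
      rw [Finset.sum_Icc_succ_top (by omega : 1 ≤ n+1), Finset.sum_Icc_succ_top (by omega : 1 ≤ n+1)]
      have hc1 : 0 < L (n+1) + m := hLm (n+1) (by omega) hn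
      have hqv : q (n+1) * ((L (n+1) + m) * breg d Dd (x n) xs)
          ≤ (L (n+1) + m) * breg d Dd (x n) xs := by
        have h0 : 0 ≤ (L (n+1) + m) * breg d Dd (x n) xs := mul_nonneg hc1.le (hVnn _ _)
        nlinarith [hq1 (n+1), hq0 (n+1)]
      have h3 : fδ (n+1) - f xs + (L (n+1) + m) * breg d Dd (x (n+1)) xs
          ≤ (L (n+1) + m) * breg d Dd (x n) xs + (δt + δ) := by
        linarith [key2 n hkN]
      have step : (fδ (n+1) - f xs) / (L (n+1) + m) + breg d Dd (x (n+1)) xs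
          ≤ breg d Dd (x n) xs + (δt + δ) * (1 / (L (n+1) + m)) := by
        have e1 : (fδ (n+1) - f xs) / (L (n+1) + m) + breg d Dd (x (n+1)) xs
            = (fδ (n+1) - f xs + (L (n+1) + m) * breg d Dd (x (n+1)) xs) / (L (n+1) + m) := by
          field_simp
        have e2 : breg d Dd (x n) xs + (δt + δ) * (1 / (L (n+1) + m))
            = ((L (n+1) + m) * breg d Dd (x n) xs + (δt + δ)) / (L (n+1) + m) := by
          field_simp
        rw [e1, e2]
        exact div_le_div_of_nonneg_right h3 hc1.le
      linarith [ihh, step]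
  have hjm := Finset.mem_Icc.mp hjN
  have hS : 0 < ∑ i ∈ Finset.Icc 1 N, 1 / (L i + m) := by
    apply Finset.sum_pos
    · intro i hi
      have hi' := Finset.mem_Icc.mp hi
      exact one_div_pos.mpr (hLm i hi'.1 hi'.2)
    · exact ⟨1, Finset.mem_Icc.mpr ⟨le_refl 1, hN⟩⟩
  have hAj_sum : (fδ jN - f xs) * (∑ i ∈ Finset.Icc 1 N, 1 / (L i + m))
      ≤ ∑ k ∈ Finset.Icc 1 N, (fδ k - f xs) / (L k + m) := by
    rw [Finset.mul_sum]
    apply Finset.sum_le_sum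
    intro i hi
    have hi' := Finset.mem_Icc.mp hi
    rw [mul_one_div]
    exact div_le_div_of_nonneg_right (by linarith [hjmin i hi]) (hLm i hi'.1 hi'.2).le
  have b2 : fδ jN - f xs ≤ (1 / ∑ i ∈ Finset.Icc 1 N, 1 / (L i + m)) * breg d Dd (x 0) xs
      + (δt + δ) := by
    have h1 := hsum N le_rfl
    have h2 : fδ jN - f xs - (δt + δ) ≤ breg d Dd (x 0) xs / (∑ i ∈ Finset.Icc 1 N, 1 / (L i + m)) := by
      rw [le_div_iff₀ hS]
      nlinarith [hAj_sum, h1, hVnn (x N) xs]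
    rw [one_div_mul_eq_div]
    linarith [h2]
  -- bound 1 : geometric rate
  have hPnn : 0 ≤ (L N + m) * ∏ i ∈ Finset.Icc 1 N, q i :=
    mul_nonneg (hLm N hN le_rfl).le (Finset.prod_nonneg fun i _ => hq0 i)
  have b1 : fδ jN - f xs ≤ (L N + m) * (∏ i ∈ Finset.Icc 1 N, q i) * breg d Dd (x 0) xs
      + (δt + δ) := by
    by_cases hcase : fδ jN - f xs ≤ δt + δ
    · have := mul_nonneg hPnn (hVnn (x 0) xs)
      linarith
    · push_neg at hcase
      have hVchain : ∀ k ≤ N - 1, breg d Dd (x k) xs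
          ≤ (∏ i ∈ Finset.Icc 1 k, q i) * breg d Dd (x 0) xs := by
        intro k
        induction k with
        | zero => intro _; simp
        | succ k ih =>
          intro hk
          have hkN : k < N := by omega
          have hc1 : 0 < L (k+1) + m := hLm (k+1) (by omega) (by omega)
          have hAk := hjmin (k+1) (Finset.mem_Icc.mpr ⟨by omega, by omega⟩)
          have hk2 := key2 k hkN
          have h3 : breg d Dd (x (k+1)) xs ≤ q (k+1) * breg d Dd (x k) xs := by
            refine le_of_mul_le_mul_left ?_ hc1
            nlinarith [hk2]
          calc breg d Dd (x (k+1)) xs ≤ q (k+1) * breg d Dd (x k) xs := h3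
              _ ≤ q (k+1) * ((∏ i ∈ Finset.Icc 1 k, q i) * breg d Dd (x 0) xs) :=
                mul_le_mul_of_nonneg_left (ih (by omega)) (hq0 _)
              _ = (∏ i ∈ Finset.Icc 1 (k+1), q i) * breg d Dd (x 0) xs := by
                rw [Finset.prod_Icc_succ_top (by omega : 1 ≤ k+1)]; ring
      have e : N - 1 + 1 = N := by omega
      have hk2 := key2 (N-1) (by omega)
      rw [e] at hk2
      have hAN := hjmin N (Finset.mem_Icc.mpr ⟨hN, le_rfl⟩)
      have hchain := hVchain (N-1) le_rfl
      have hprod : ∏ i ∈ Finset.Icc 1 N, q i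
          = (∏ i ∈ Finset.Icc 1 (N-1), q i) * q N := by
        conv_lhs => rw [← e]
        rw [Finset.prod_Icc_succ_top (by omega : 1 ≤ N - 1 + 1), e]
      have h5 : q N * ((L N + m) * breg d Dd (x (N-1)) xs)
          ≤ q N * ((L N + m) * ((∏ i ∈ Finset.Icc 1 (N-1), q i) * breg d Dd (x 0) xs)) :=
        mul_le_mul_of_nonneg_left
          (mul_le_mul_of_nonneg_left hchain (hLm N hN le_rfl).le) (hq0 N)
      have h6 : q N * ((L N + m) * ((∏ i ∈ Finset.Icc 1 (N-1), q i) * breg d Dd (x 0) xs))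
          = (L N + m) * (∏ i ∈ Finset.Icc 1 N, q i) * breg d Dd (x 0) xs := by
        rw [hprod]; ring
      have h7 : 0 ≤ (L N + m) * breg d Dd (x N) xs :=
        mul_nonneg (hLm N hN le_rfl).le (hVnn _ _)
      linarith [hk2, h5, h6, h7, hAN]
  -- combine
  have hV0 := hVnn (x 0) xs
  have hminmul : min ((L N + m) * ∏ i ∈ Finset.Icc 1 N, q i)
      (1 / ∑ i ∈ Finset.Icc 1 N, 1 / (L i + m)) * breg d Dd (x 0) xs
      = min ((L N + m) * (∏ i ∈ Finset.Icc 1 N, q i) * breg d Dd (x 0) xs)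
        ((1 / ∑ i ∈ Finset.Icc 1 N, 1 / (L i + m)) * breg d Dd (x 0) xs) :=
    min_mul_of_nonneg _ _ hV0
  have hcomb : fδ jN - f xs ≤ min ((L N + m) * ∏ i ∈ Finset.Icc 1 N, q i)
      (1 / ∑ i ∈ Finset.Icc 1 N, 1 / (L i + m)) * breg d Dd (x 0) xs + (δt + δ) := by
    rw [hminmul]
    rcases le_total ((L N + m) * (∏ i ∈ Finset.Icc 1 N, q i) * breg d Dd (x 0) xs)
      ((1 / ∑ i ∈ Finset.Icc 1 N, 1 / (L i + m)) * breg d Dd (x 0) xs) with h | h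
    · rw [min_eq_left h]; exact b1
    · rw [min_eq_right h]; exact b2
  have hfj := (hb jN hjm.2).1
  linarith [hcomb, hfj]
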